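/- Let F be the vertex-disjoint union of the countable star S_1 with a finite set of isolated vertices. Then there is no factorization of the complete graph K_ℕ on a countably infinite vertex set into factors each isomorphic to F; that is, FP(F) has no solution. -/

import Mathlib

/-- The countable star `S₁`: the graph on `ℕ` whose edges are `{0, i}` for `i ≥ 1`. -/
def Star1 : SimpleGraph ℕ :=
  SimpleGraph.fromRel (fun a b => a = 0 ∧ b ≠ 0)

/-- The vertex-disjoint union of the countable star `S₁` with `m` isolated
vertices, on the vertex set `ℕ ⊕ Fin m`. -/
def StarPlusIsolated (m : ℕ) : SimpleGraph (ℕ ⊕ Fin m) :=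
  Star1.map (⟨Sum.inl, Sum.inl_injective⟩ : ℕ ↪ ℕ ⊕ Fin m)

/-- A set `𝒢` of graphs is a factorization of `Λ`: each member is a (spanning)
subgraph of `Λ` and the edge sets of the members partition the edge set of `Λ`. -/
def IsFactorizationSet {V : Type*} (Λ : SimpleGraph V) (𝒢 : Set (SimpleGraph V)) : Prop :=
  (∀ Γ ∈ 𝒢, Γ ≤ Λ) ∧ ∀ e ∈ Λ.edgeSet, ∃! Γ, Γ ∈ 𝒢 ∧ e ∈ Γ.edgeSet

private lemma star_struct (m : ℕ) (Γ : SimpleGraph ℕ) (e : StarPlusIsolated m ≃g Γ) :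
    ∃ c : ℕ, ∃ E : Finset ℕ, E.card ≤ m ∧
      (∀ x y, Γ.Adj x y → x = c ∨ y = c) ∧
      (∀ x, x ≠ c → x ∉ E → Γ.Adj c x) := by
  refine ⟨e (Sum.inl 0), Finset.image (fun j => e (Sum.inr j)) Finset.univ, ?_, ?_, ?_⟩
  · exact Finset.card_image_le.trans (by simp)
  · intro x y hxy
    have h : (StarPlusIsolated m).Adj (e.symm x) (e.symm y) := e.symm.map_adj_iff.mpr hxy
    simp only [StarPlusIsolated, SimpleGraph.map_adj] at h
    obtain ⟨a, b, hab, ha, hb⟩ := h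
    simp only [Star1, SimpleGraph.fromRel_adj] at hab
    simp only [Function.Embedding.coeFn_mk] at ha hb
    rcases hab.2 with ⟨h0, -⟩ | ⟨h0, -⟩
    · left; subst h0
      have := congrArg e ha
      exact (this.trans (e.apply_symm_apply x)).symm
    · right; subst h0
      have := congrArg e hb
      exact (this.trans (e.apply_symm_apply y)).symm
  · intro x hxc hxE
    rcases h : e.symm x with a | j
    · have hx : e (Sum.inl a) = x := by rw [← h]; simp
      have ha0 : a ≠ 0 := by
        rintro rfl
        exact hxc hx.symm
      have hadj : (StarPlusIsolated m).Adj (Sum.inl 0) (Sum.inl a) := by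
        simp only [StarPlusIsolated, SimpleGraph.map_adj]
        refine ⟨0, a, ?_, rfl, rfl⟩
        simp [Star1, SimpleGraph.fromRel_adj, ha0, Ne.symm ha0]
      have := e.map_adj_iff.mpr hadj
      rwa [hx] at this
    · exfalso
      apply hxE
      simp only [Finset.mem_image]
      exact ⟨j, Finset.mem_univ j, by rw [← h]; simp⟩

/-- if `F` is the vertex-disjoint union of the countable star `S₁`
with a finite set of isolated vertices, then there is no factorization of the
complete graph `K_ℕ` into factors each isomorphic to `F`. -/
theorem stmt_12 (m : ℕ) :
    ¬ ∃ 𝒢 : Set (SimpleGraph ℕ), IsFactorizationSet (⊤ : SimpleGraph ℕ) 𝒢 ∧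
        ∀ Γ ∈ 𝒢, Nonempty (StarPlusIsolated m ≃g Γ) := by
  classical
  rintro ⟨𝒢, ⟨hsub, huniq⟩, hiso⟩
  have key : ∀ Γ : SimpleGraph ℕ, ∃ c : ℕ, ∃ E : Finset ℕ, Γ ∈ 𝒢 →
      E.card ≤ m ∧ (∀ x y, Γ.Adj x y → x = c ∨ y = c) ∧
      (∀ x, x ≠ c → x ∉ E → Γ.Adj c x) := by
    intro Γ
    by_cases hΓ : Γ ∈ 𝒢
    · obtain ⟨e⟩ := hiso Γ hΓ
      obtain ⟨c, E, h⟩ := star_struct m Γ e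
      exact ⟨c, E, fun _ => h⟩
    · exact ⟨0, ∅, fun h => absurd h hΓ⟩
  choose c E hkey using key
  -- any edge lies in a unique factor
  have uniq : ∀ Γ₁ ∈ 𝒢, ∀ Γ₂ ∈ 𝒢, ∀ x y : ℕ, Γ₁.Adj x y → Γ₂.Adj x y → Γ₁ = Γ₂ := by
    intro Γ₁ h₁ Γ₂ h₂ x y ha1 ha2
    have hxy : x ≠ y := ha1.ne
    obtain ⟨Γ, -, hu⟩ := huniq s(x, y) (by simpa using hxy)
    rw [hu Γ₁ ⟨h₁, (SimpleGraph.mem_edgeSet Γ₁).mpr ha1⟩,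
      hu Γ₂ ⟨h₂, (SimpleGraph.mem_edgeSet Γ₂).mpr ha2⟩]
  set Cs : Set ℕ := {v | ∃ Γ ∈ 𝒢, c Γ = v} with hCsdef
  have hCsInf : Cs.Infinite := by
    have hsub2 : Csᶜ.Subsingleton := by
      intro v hv w hw
      by_contra hvw
      obtain ⟨Γ, hΓ, he⟩ : ∃ Γ ∈ 𝒢, Γ.Adj v w := by
        obtain ⟨Γ, ⟨hΓ, he⟩, -⟩ := huniq s(v, w) (by simpa using hvw)
        exact ⟨Γ, hΓ, (SimpleGraph.mem_edgeSet Γ).mp he⟩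
      rcases (hkey Γ hΓ).2.1 v w he with h | h
      · exact hv ⟨Γ, hΓ, h.symm⟩
      · exact hw ⟨Γ, hΓ, h.symm⟩
    have hfin : Csᶜ.Finite := hsub2.finite
    simpa using hfin.infinite_compl
  have hGex : ∀ v : ℕ, ∃ Γ : SimpleGraph ℕ, v ∈ Cs → Γ ∈ 𝒢 ∧ c Γ = v := by
    intro v
    by_cases hv : v ∈ Cs
    · obtain ⟨Γ, hΓ, hc⟩ := hv
      exact ⟨Γ, fun _ => ⟨hΓ, hc⟩⟩
    · exact ⟨⊥, fun h => absurd h hv⟩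
  choose G hG using hGex
  obtain ⟨A, hAsub, hAcard⟩ := hCsInf.exists_subset_card_eq (m + 1)
  have hdiff : (Cs \ ↑(A ∪ A.biUnion fun a => E (G a))).Infinite :=
    hCsInf.diff (Finset.finite_toSet _)
  obtain ⟨b, hbCs, hbF⟩ := hdiff.nonempty
  simp only [Finset.coe_union, Set.mem_union, Finset.mem_coe, Finset.mem_biUnion,
    not_or, not_exists] at hbF
  obtain ⟨hbA, hbE⟩ := hbF
  obtain ⟨hGb, hcb⟩ := hG b hbCs
  have hAE : A ⊆ E (G b) := by
    intro a ha
    have haCs : a ∈ Cs := hAsub ha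
    obtain ⟨hGa, hca⟩ := hG a haCs
    have hab : a ≠ b := fun h => hbA (h ▸ ha)
    by_contra haE
    have adj1 : (G a).Adj a b := by
      have := (hkey (G a) hGa).2.2 b (by rw [hca]; exact Ne.symm hab)
        (fun hb' => hbE a ⟨ha, hb'⟩)
      rwa [hca] at this
    have adj2 : (G b).Adj a b := by
      have := (hkey (G b) hGb).2.2 a (by rw [hcb]; exact hab) haE
      rw [hcb] at this
      exact this.symm
    have hGG : G a = G b := uniq (G a) hGa (G b) hGb a b adj1 adj2
    exact hab (hca ▸ hcb ▸ hGG ▸ rfl)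
  have := (Finset.card_le_card hAE).trans (hkey (G b) hGb).1
  omega
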